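/- Let P = {P_θ : θ ∈ Θ} be a family of probability measures on (Ω, F) such that the family Υ = {ν : ν is σ-finite and P_θ ≪ ν for all θ} is non-empty. Then there exists a minimal dominating measure λ for P, i.e. a measure λ ∈ Υ such that λ ≪ ν for every ν ∈ Υ. -/

import Mathlib

open MeasureTheory
open scoped ENNReal

/-- If the family `Υ` of σ-finite measures dominating the family `P` is non-empty,
then there exists a minimal dominating measure `λ` for `P`: a member of `Υ` that is
absolutely continuous with respect to every member of `Υ`. -/
theorem exists_minimal_dominating_measure {Ω Θ : Type*} [MeasurableSpace Ω]
    (P : Θ → Measure Ω) [∀ θ, IsProbabilityMeasure (P θ)]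
    (hΥ : ∃ ν : Measure Ω, SigmaFinite ν ∧ ∀ θ, P θ ≪ ν) :
    ∃ l : Measure Ω, (SigmaFinite l ∧ ∀ θ, P θ ≪ l) ∧
      ∀ ν : Measure Ω, SigmaFinite ν → (∀ θ, P θ ≪ ν) → l ≪ ν := by
  by_cases hne : Nonempty Θ
  swap
  · refine ⟨0, ⟨inferInstance, fun θ => absurd ⟨θ⟩ hne⟩,
      fun ν _ _ => Measure.AbsolutelyContinuous.mk fun s _ _ => by simp⟩
  -- Get a finite measure dominating all `P θ`.
  obtain ⟨ν₀, hν₀, hPν₀⟩ := hΥ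
  obtain ⟨μ, hμfin, hν₀μ, -⟩ := exists_isFiniteMeasure_absolutelyContinuous ν₀
  have hPμ : ∀ θ, P θ ≪ μ := fun θ => (hPν₀ θ).trans hν₀μ
  -- densities and supports
  set f : Θ → Ω → ℝ≥0∞ := fun θ => (P θ).rnDeriv μ with hf
  have hfmeas : ∀ θ, Measurable (f θ) := fun θ => Measure.measurable_rnDeriv _ _
  have hwd : ∀ θ, μ.withDensity (f θ) = P θ := fun θ =>
    Measure.withDensity_rnDeriv_eq _ _ (hPμ θ)
  set S : Θ → Set Ω := fun θ => {x | f θ x ≠ 0} with hS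
  have hSmeas : ∀ θ, MeasurableSet (S θ) :=
    fun θ => (hfmeas θ (measurableSet_singleton 0)).compl
  -- key: if `μ (A ∩ S θ) = 0` then `P θ A = 0`
  have key : ∀ θ (A : Set Ω), MeasurableSet A → μ (S θ ∩ A) = 0 → P θ A = 0 := by
    intro θ A hA h
    rw [← hwd θ, withDensity_apply _ hA]
    rw [← Measure.restrict_apply (hSmeas θ)] at h
    have : f θ =ᵐ[μ.restrict A] 0 := h
    rw [lintegral_congr_ae this]
    simp
  -- converse: if `P θ A = 0` then `μ (S θ ∩ A) = 0`
  have key' : ∀ θ (A : Set Ω), MeasurableSet A → P θ A = 0 → μ (S θ ∩ A) = 0 := by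
    intro θ A hA h
    rw [← hwd θ, withDensity_apply _ hA] at h
    rw [← Measure.restrict_apply (hSmeas θ)]
    have := (lintegral_eq_zero_iff (hfmeas θ)).mp h
    exact this
  obtain ⟨θ₀⟩ := hne
  -- the supremum over countable subfamilies
  set c : ℝ≥0∞ := ⨆ g : ℕ → Θ, μ (⋃ n, S (g n)) with hc
  have hc_le : ∀ g : ℕ → Θ, μ (⋃ n, S (g n)) ≤ c := fun g => le_iSup (fun g => μ (⋃ n, S (g n))) g
  have hc_lt_top : c < ∞ :=
    lt_of_le_of_lt (iSup_le fun g => measure_mono (Set.subset_univ _)) (measure_lt_top μ Set.univ)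
  -- choose a maximizing sequence and diagonalize
  have hexists : ∀ k : ℕ, ∃ g : ℕ → Θ, c ≤ μ (⋃ n, S (g n)) + 1 / (k + 1) := by
    intro k
    by_cases hc0 : c = 0
    · exact ⟨fun _ => θ₀, by simp [hc0]⟩
    have h1 : c - 1 / (k + 1) < c :=
      ENNReal.sub_lt_self hc_lt_top.ne hc0 (by simp)
    rw [hc] at h1
    obtain ⟨g, hg⟩ := lt_iSup_iff.mp h1
    exact ⟨g, tsub_le_iff_right.mp hg.le⟩
  choose gs hgs using hexists
  set G : ℕ → Θ := fun m => gs (Nat.unpair m).1 (Nat.unpair m).2 with hG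
  set U : Set Ω := ⋃ m, S (G m) with hU
  have hUmeas : MeasurableSet U := MeasurableSet.iUnion fun m => hSmeas _
  have hUc : μ U = c := by
    refine le_antisymm (hc_le G) ?_
    have hsub : ∀ k, (⋃ n, S (gs k n)) ⊆ U := by
      intro k
      refine Set.iUnion_subset fun n => ?_
      have : S (gs k n) = S (G (Nat.pair k n)) := by simp [hG]
      rw [this]
      exact Set.subset_iUnion (fun m => S (G m)) _
    have h1 : ∀ k : ℕ, c ≤ μ U + 1 / (k + 1) := fun k =>
      le_trans (hgs k) (add_le_add (measure_mono (hsub k)) le_rfl)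
    refine ENNReal.le_of_forall_pos_le_add fun ε hε _ => ?_
    obtain ⟨n, hn⟩ := ENNReal.exists_inv_nat_lt (show (ε : ℝ≥0∞) ≠ 0 by
      exact_mod_cast hε.ne')
    refine le_trans (h1 n) (add_le_add le_rfl ?_)
    rw [one_div]
    refine le_trans (ENNReal.inv_le_inv.mpr ?_) hn.le
    exact_mod_cast Nat.le_succ n
  -- maximality: every support is a.e. contained in U
  have hmax : ∀ θ, μ (S θ \ U) = 0 := by
    intro θ
    by_contra h
    have hlt : c < μ (U ∪ (S θ \ U)) := by
      rw [measure_union Set.disjoint_sdiff_right ((hSmeas θ).diff hUmeas), hUc]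
      exact ENNReal.lt_add_right hc_lt_top.ne h
    have hle : μ (U ∪ (S θ \ U)) ≤ c := by
      set g' : ℕ → Θ := fun m => if m = 0 then θ else G (m - 1) with hg'
      have : U ∪ (S θ \ U) = ⋃ m, S (g' m) := by
        apply Set.Subset.antisymm
        · rintro x (hx | hx)
          · rw [hU] at hx
            obtain ⟨m, hm⟩ := Set.mem_iUnion.mp hx
            refine Set.mem_iUnion.mpr ⟨m + 1, ?_⟩
            simpa [hg'] using hm
          · exact Set.mem_iUnion.mpr ⟨0, by simpa [hg'] using hx.1⟩
        · refine Set.iUnion_subset fun m => ?_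
          by_cases hm : m = 0
          · subst hm
            simp only [hg', if_pos rfl]
            intro x hx
            by_cases hxU : x ∈ U
            · exact Or.inl hxU
            · exact Or.inr ⟨hx, hxU⟩
          · simp only [hg', if_neg hm]
            exact (Set.subset_iUnion (fun m => S (G m)) (m - 1)).trans Set.subset_union_left
      rw [this]
      exact hc_le _
    exact absurd (hle.trans_lt hlt) (lt_irrefl _)
  -- define the candidate measure
  set l : Measure Ω := Measure.sum (fun n => ((2 : ℝ≥0∞)⁻¹ ^ (n + 1)) • P (G n)) with hl
  have hl_apply : ∀ A : Set Ω, MeasurableSet A →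
      l A = ∑' n, (2 : ℝ≥0∞)⁻¹ ^ (n + 1) * P (G n) A := by
    intro A hA
    rw [hl, Measure.sum_apply _ hA]
    simp [Measure.smul_apply, smul_eq_mul]
  have hlfin : IsFiniteMeasure l := by
    constructor
    rw [hl_apply Set.univ MeasurableSet.univ]
    simp only [measure_univ, mul_one]
    have heq : (∑' n : ℕ, (2 : ℝ≥0∞)⁻¹ ^ (n + 1))
        = (∑' n : ℕ, (2 : ℝ≥0∞)⁻¹ ^ n) * 2⁻¹ := by
      simp_rw [pow_succ]
      rw [ENNReal.tsum_mul_right]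
    rw [heq, ENNReal.tsum_geometric]
    rw [ENNReal.one_sub_inv_two]
    refine ENNReal.mul_lt_top ?_ ?_ <;> simp
  refine ⟨l, ⟨?_, ?_⟩, ?_⟩
  · exact @IsFiniteMeasure.toSigmaFinite _ _ _ hlfin
  · -- P θ ≪ l
    intro θ
    refine Measure.AbsolutelyContinuous.mk fun A hA hlA => ?_
    rw [hl_apply A hA] at hlA
    have hPn : ∀ n, P (G n) A = 0 := by
      intro n
      have := (ENNReal.tsum_eq_zero.mp hlA) n
      have h2 : (2 : ℝ≥0∞)⁻¹ ^ (n + 1) ≠ 0 := by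
        apply pow_ne_zero; simp
      exact (mul_eq_zero.mp this).resolve_left h2
    have hμSn : ∀ n, μ (S (G n) ∩ A) = 0 := fun n => key' (G n) A hA (hPn n)
    have hμUA : μ (U ∩ A) = 0 := by
      rw [hU, Set.iUnion_inter]
      exact measure_iUnion_null fun n => hμSn n
    have hμSθA : μ (S θ ∩ A) = 0 := by
      refine measure_mono_null (fun x hx => ?_) (measure_union_null (hmax θ) hμUA)
      by_cases hxU : x ∈ U
      · exact Or.inr ⟨hxU, hx.2⟩
      · exact Or.inl ⟨hx.1, hxU⟩
    exact key θ A hA hμSθA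
  · -- minimality
    intro ν _ hPν
    refine Measure.AbsolutelyContinuous.mk fun A hA hνA => ?_
    rw [hl_apply A hA]
    refine ENNReal.tsum_eq_zero.mpr fun n => ?_
    rw [hPν (G n) hνA, mul_zero]
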